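/- Geodesics from a nearby point to a Morse ray are uniformly Morse: for every Morse gauge N and every D ≥ 0 there exists a Morse gauge N' with N' ≥ N such that the following holds. Let X be a proper geodesic metric space, α an N-Morse geodesic ray in X with α(0) = p, and p' ∈ X with d(p, p') ≤ D. Then every geodesic segment from p' to a point of the image of α is N'-Morse. -/

import Mathlib

/-- A *geodesic segment* from `x` to `y`. -/
def IsGeodesicSegment {X : Type*} [MetricSpace X] (γ : ℝ → X) (x y : X) : Prop :=
  γ 0 = x ∧ γ (dist x y) = y ∧
    ∀ s ∈ Set.Icc (0 : ℝ) (dist x y), ∀ t ∈ Set.Icc (0 : ℝ) (dist x y),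
      dist (γ s) (γ t) = |s - t|

/-- A metric space is *geodesic* if every pair of points is joined by a geodesic segment. -/
def IsGeodesicSpace (X : Type*) [MetricSpace X] : Prop :=
  ∀ x y : X, ∃ γ : ℝ → X, IsGeodesicSegment γ x y

/-- A *geodesic ray*. -/
def IsGeodesicRay {X : Type*} [MetricSpace X] (c : ℝ → X) : Prop :=
  ∀ s t : ℝ, 0 ≤ s → 0 ≤ t → dist (c s) (c t) = |s - t|

/-- A `(lam, eps)`-quasi-geodesic defined on `[a, b]`. -/
def IsQuasiGeodesicOn {X : Type*} [MetricSpace X] (lam eps a b : ℝ) (σ : ℝ → X) : Prop :=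
  ∀ s ∈ Set.Icc a b, ∀ t ∈ Set.Icc a b,
    |s - t| / lam - eps ≤ dist (σ s) (σ t) ∧ dist (σ s) (σ t) ≤ lam * |s - t| + eps

/-- A *Morse gauge* is a function `[1,∞) × [0,∞) → [0,∞)`. -/
def IsMorseGauge (N : ℝ → ℝ → ℝ) : Prop :=
  ∀ lam eps : ℝ, 1 ≤ lam → 0 ≤ eps → 0 ≤ N lam eps

/-- A subset `A` of `X` (the image of a geodesic) is *`N`-Morse* if every
`(lam, eps)`-quasi-geodesic with endpoints on `A` stays in the closed
`N lam eps`-neighborhood of `A`. -/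
def IsMorseSet {X : Type*} [MetricSpace X] (N : ℝ → ℝ → ℝ) (A : Set X) : Prop :=
  ∀ (lam eps a b : ℝ) (σ : ℝ → X), 1 ≤ lam → 0 ≤ eps → a ≤ b →
    IsQuasiGeodesicOn lam eps a b σ → σ a ∈ A → σ b ∈ A →
    ∀ s ∈ Set.Icc a b, Metric.infDist (σ s) A ≤ N lam eps

open Set Metric
lemma cross_up (c : ℕ → ℝ) (n : ℕ) (J W : ℝ) (h0 : c 0 ≤ W) (hn : W < c n)
    (hstep : ∀ i, i < n → c (i+1) ≤ c i + J) : ∃ i, i ≤ n ∧ W < c i ∧ c i ≤ W + J := by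
  classical
  have hex : ∃ i, W < c i := ⟨n, hn⟩
  set k := Nat.find hex with hk
  have hkspec : W < c k := Nat.find_spec hex
  have hkn : k ≤ n := Nat.find_min' hex hn
  have hk0 : k ≠ 0 := by
    intro h; rw [h] at hkspec; linarith
  have hkm : ¬ W < c (k - 1) := Nat.find_min hex (by omega)
  have h1 : c (k - 1 + 1) ≤ c (k - 1) + J := hstep _ (by omega)
  have h2 : k - 1 + 1 = k := by omega
  rw [h2] at h1
  exact ⟨k, hkn, hkspec, by push_neg at hkm; linarith⟩

lemma cross_down (c : ℕ → ℝ) (n : ℕ) (J W : ℝ) (h0 : W + J < c 0) (hn : c n ≤ W + J)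
    (hstep : ∀ i, i < n → c i ≤ c (i+1) + J) : ∃ i, i ≤ n ∧ W < c i ∧ c i ≤ W + J := by
  classical
  have hex : ∃ i, c i ≤ W + J := ⟨n, hn⟩
  set k := Nat.find hex with hk
  have hkspec : c k ≤ W + J := Nat.find_spec hex
  have hkn : k ≤ n := Nat.find_min' hex hn
  have hk0 : k ≠ 0 := by
    intro h; rw [h] at hkspec; linarith
  have hkm : ¬ c (k - 1) ≤ W + J := Nat.find_min hex (by omega)
  have h1 : c (k - 1) ≤ c (k - 1 + 1) + J := hstep _ (by omega)
  have h2 : k - 1 + 1 = k := by omega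
  rw [h2] at h1
  exact ⟨k, hkn, by push_neg at hkm; linarith, hkspec⟩

lemma clamp_lip (a b s t : ℝ) : |max a (min s b) - max a (min t b)| ≤ |s - t| := by
  rw [abs_sub_le_iff] at *
  constructor <;>
  · simp only [max_def, min_def]
    split_ifs <;> simp_all <;> cases abs_cases (s - t) <;> linarith

lemma ray_image_closed {X : Type*} [MetricSpace X] {α : ℝ → X}
    (hray : IsGeodesicRay α) : IsClosed (α '' Ici 0) := by
  haveI : CompleteSpace (Ici (0:ℝ)) := (isClosed_Ici).completeSpace_coe
  have hiso : Isometry (fun t : Ici (0:ℝ) => α t) := by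
    apply Isometry.of_dist_eq
    rintro ⟨s, hs⟩ ⟨t, ht⟩
    rw [hray s t hs ht, Subtype.dist_eq, Real.dist_eq]
  rw [Set.image_eq_range]
  exact hiso.isClosedEmbedding.isClosed_range

lemma ray_continuousOn {X : Type*} [MetricSpace X] {α : ℝ → X}
    (hray : IsGeodesicRay α) (u : ℝ) : ContinuousOn α (Icc 0 u) := by
  apply LipschitzOnWith.continuousOn (K := 1)
  rw [lipschitzOnWith_iff_dist_le_mul]
  intro s hs t ht
  rw [hray s t hs.1 ht.1, Real.dist_eq]
  norm_num
set_option maxHeartbeats 1000000 in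
lemma chain_bound {X : Type*} [MetricSpace X] {α : ℝ → X} (hray : IsGeodesicRay α)
    {lam e' K a' b' : ℝ} {σ' : ℝ → X} (hlam : 1 ≤ lam) (he'0 : 0 ≤ e') (hK0 : 0 ≤ K)
    (hqg : IsQuasiGeodesicOn lam e' a' b' σ')
    (hw : ∀ r ∈ Set.Icc a' b', ∃ v, 0 ≤ v ∧ dist (σ' r) (α v) ≤ K)
    {u₁ u₂ : ℝ} (hu₁0 : 0 ≤ u₁) (hu₂0 : 0 ≤ u₂)
    (hend1 : σ' a' = α u₁) (hend2 : σ' b' = α u₂)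
    {s u : ℝ} (hs : s ∈ Set.Icc a' b') (hu0 : 0 ≤ u) (hud : dist (σ' s) (α u) ≤ K) :
    u ≤ max u₁ u₂ + (2*(2*K + lam + e') + 4*K
      + 2*lam^2*(2*K + (2*K + lam + e') + e') + 2*e' + 2) := by
  classical
  obtain ⟨J, hJ_def⟩ : ∃ x : ℝ, x = 2*K + lam + e' := ⟨_, rfl⟩
  obtain ⟨R, hR_def⟩ : ∃ x : ℝ, x = 2*J + 4*K + 2*lam^2*(2*K + J + e') + 2*e' + 2 := ⟨_, rfl⟩
  obtain ⟨V, hV_def⟩ : ∃ x : ℝ, x = max u₁ u₂ := ⟨_, rfl⟩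
  have hlam0 : (0:ℝ) < lam := lt_of_lt_of_le one_pos hlam
  have hJ0 : 0 ≤ J := by rw [hJ_def]; linarith only [hK0, he'0, hlam]
  have hsq : 0 ≤ lam^2 := sq_nonneg lam
  have hprod : 0 ≤ 2*lam^2*(2*K + J + e') := mul_nonneg (by linarith only [hsq]) (by linarith only [hK0, hJ0, he'0])
  have hR0 : 0 ≤ R := by rw [hR_def]; linarith only [hJ0, hK0, hprod, he'0]
  have hu₁V : u₁ ≤ V := by rw [hV_def]; exact le_max_left _ _
  have hu₂V : u₂ ≤ V := by rw [hV_def]; exact le_max_right _ _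
  suffices hfin : u ≤ V + R by
    rw [hV_def, hR_def, hJ_def] at hfin
    linarith only [hfin]
  have hwex : ∀ r : ℝ, ∃ v, 0 ≤ v ∧ (r ∈ Set.Icc a' b' → dist (σ' r) (α v) ≤ K) := by
    intro r
    by_cases h : r ∈ Set.Icc a' b'
    · obtain ⟨v, hv0, hvd⟩ := hw r h
      exact ⟨v, hv0, fun _ => hvd⟩
    · exact ⟨0, le_rfl, fun h' => absurd h' h⟩
  choose w hw0 hwK using hwex
  have hchain : ∀ r ∈ Set.Icc a' b', ∀ r' ∈ Set.Icc a' b', |r - r'| ≤ 1 →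
      ∀ v v', 0 ≤ v → 0 ≤ v' → dist (σ' r) (α v) ≤ K → dist (σ' r') (α v') ≤ K →
      |v - v'| ≤ J := by
    intro r hr r' hr' hrr v v' hv hv' hdv hdv'
    have h1 : dist (α v) (α v') = |v - v'| := hray v v' hv hv'
    have h2 := dist_triangle4 (α v) (σ' r) (σ' r') (α v')
    rw [dist_comm (α v) (σ' r), h1] at h2
    have h3 := (hqg r hr r' hr').2
    have h4 : lam * |r - r'| ≤ lam * 1 := mul_le_mul_of_nonneg_left hrr (by linarith)
    rw [hJ_def]
    linarith only [h2, h3, h4, hdv, hdv']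
  by_contra hcon
  push_neg at hcon
  have hsa' : a' ≤ s := hs.1
  have hsb' : s ≤ b' := hs.2
  -- left chain on [a', s]
  obtain ⟨n, hn_def⟩ : ∃ x : ℕ, x = ⌈s - a'⌉₊ := ⟨_, rfl⟩
  by_cases hn0 : n = 0
  · have h' : ⌈s - a'⌉₊ = 0 := by rw [← hn_def]; exact hn0
    have h1 : s - a' ≤ 0 := Nat.ceil_eq_zero.mp h'
    have hseq : s = a' := le_antisymm (by linarith) hsa'
    have h2 : dist (α u₁) (α u) ≤ K := by
      rw [← hend1, ← hseq]; exact hud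
    rw [hray u₁ u hu₁0 hu0] at h2
    have h3 := abs_le.mp h2
    have h4 : u - u₁ ≤ K := by linarith only [h3.1]
    linarith only [h4, hcon, hR_def, hJ0, hK0, he'0, hprod, hu₁V]
  · have hnpos : 0 < (n:ℝ) := by exact_mod_cast Nat.pos_of_ne_zero hn0
    obtain ⟨gap, hgap_def⟩ : ∃ x : ℝ, x = (s - a') / (n:ℝ) := ⟨_, rfl⟩
    have hgap0 : 0 ≤ gap := by
      rw [hgap_def]
      exact div_nonneg (by linarith only [hsa']) hnpos.le
    have hng : (n:ℝ) * gap = s - a' := by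
      rw [hgap_def]; field_simp
    have hgap1 : gap ≤ 1 := by
      rw [hgap_def]
      rw [div_le_one hnpos]
      calc s - a' ≤ (⌈s - a'⌉₊ : ℝ) := Nat.le_ceil _
      _ = (n:ℝ) := by rw [hn_def]
    obtain ⟨tt, htt_def⟩ : ∃ f : ℕ → ℝ, f = fun i : ℕ => a' + (i:ℝ) * gap := ⟨_, rfl⟩
    have htt_le : ∀ i : ℕ, i ≤ n → tt i ≤ s := by
      intro i hi
      have h1 : (i:ℝ) * gap ≤ n * gap := by
        apply mul_le_mul_of_nonneg_right _ hgap0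
        exact_mod_cast hi
      simp only [htt_def]; linarith only [h1, hng]
    have htt_ge : ∀ i : ℕ, a' ≤ tt i := by
      intro i
      have h1 : 0 ≤ (i:ℝ) * gap := mul_nonneg (Nat.cast_nonneg i) hgap0
      simp only [htt_def]; linarith only [h1]
    have htt_mem : ∀ i : ℕ, i ≤ n → tt i ∈ Set.Icc a' b' := fun i hi =>
      ⟨htt_ge i, le_trans (htt_le i hi) hsb'⟩
    have htt_n : tt n = s := by
      simp only [htt_def]; linarith only [hng]
    have htt_0 : tt 0 = a' := by simp [htt_def]
    obtain ⟨c, hc_def⟩ : ∃ f : ℕ → ℝ, f = fun i => if i = 0 then u₁ else if i = n then u else w (tt i) := ⟨_, rfl⟩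
    have hc_all : ∀ i : ℕ, i ≤ n → 0 ≤ c i ∧ dist (σ' (tt i)) (α (c i)) ≤ K := by
      intro i hi
      by_cases h0 : i = 0
      · have hceq : c i = u₁ := by rw [hc_def]; simp [h0]
        rw [hceq, h0, htt_0, hend1, dist_self]
        exact ⟨hu₁0, hK0⟩
      · by_cases hn' : i = n
        · have hceq : c i = u := by rw [hc_def]; simp [h0, hn', hn0]
          rw [hceq, hn', htt_n]
          exact ⟨hu0, hud⟩
        · have hceq : c i = w (tt i) := by rw [hc_def]; simp [h0, hn']
          rw [hceq]
          exact ⟨hw0 _, hwK _ (htt_mem i hi)⟩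
    have hc_step : ∀ i : ℕ, i < n → |c (i+1) - c i| ≤ J := by
      intro i hilt
      have h1 : |tt (i+1) - tt i| ≤ 1 := by
        have he : tt (i+1) - tt i = gap := by
          simp only [htt_def]; push_cast; ring
        rw [he, abs_of_nonneg hgap0]; exact hgap1
      have hi1 := hc_all (i+1) (by omega)
      have hi0 := hc_all i (by omega)
      exact hchain (tt (i+1)) (htt_mem _ (by omega)) (tt i) (htt_mem _ (by omega)) h1
        (c (i+1)) (c i) hi1.1 hi0.1 hi1.2 hi0.2
    have hc0W : c 0 ≤ V + R/2 := by
      have hceq : c 0 = u₁ := by rw [hc_def]; simp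
      rw [hceq]
      linarith only [hu₁V, hR0]
    have hcnW : V + R/2 < c n := by
      have hceq : c n = u := by rw [hc_def]; simp [hn0]
      rw [hceq]
      linarith only [hcon, hR0]
    obtain ⟨i₁, hi₁n, hv₁l, hv₁u⟩ := cross_up c n J (V + R/2) hc0W hcnW
      (fun i hi => by linarith only [(abs_le.mp (hc_step i hi)).2])
    -- right chain on [s, b']
    obtain ⟨n', hn'_def⟩ : ∃ x : ℕ, x = ⌈b' - s⌉₊ := ⟨_, rfl⟩
    by_cases hn'0 : n' = 0
    · have h' : ⌈b' - s⌉₊ = 0 := by rw [← hn'_def]; exact hn'0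
      have h1 : b' - s ≤ 0 := Nat.ceil_eq_zero.mp h'
      have hseq : s = b' := le_antisymm hsb' (by linarith)
      have h2 : dist (α u₂) (α u) ≤ K := by
        rw [← hend2, ← hseq]; exact hud
      rw [hray u₂ u hu₂0 hu0] at h2
      have h3 := abs_le.mp h2
      have h4 : u - u₂ ≤ K := by linarith only [h3.1]
      linarith only [h4, hcon, hR_def, hJ0, hK0, he'0, hprod, hu₂V]
    · have hn'pos : 0 < (n':ℝ) := by exact_mod_cast Nat.pos_of_ne_zero hn'0
      obtain ⟨gap', hgap'_def⟩ : ∃ x : ℝ, x = (b' - s) / (n':ℝ) := ⟨_, rfl⟩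
      have hgap'0 : 0 ≤ gap' := by
        rw [hgap'_def]
        exact div_nonneg (by linarith only [hsb']) hn'pos.le
      have hng' : (n':ℝ) * gap' = b' - s := by
        rw [hgap'_def]; field_simp
      have hgap'1 : gap' ≤ 1 := by
        rw [hgap'_def]
        rw [div_le_one hn'pos]
        calc b' - s ≤ (⌈b' - s⌉₊ : ℝ) := Nat.le_ceil _
        _ = (n':ℝ) := by rw [hn'_def]
      obtain ⟨tt', htt'_def⟩ : ∃ f : ℕ → ℝ, f = fun i : ℕ => s + (i:ℝ) * gap' := ⟨_, rfl⟩
      have htt'_ge : ∀ i : ℕ, s ≤ tt' i := by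
        intro i
        have h1 : 0 ≤ (i:ℝ) * gap' := mul_nonneg (Nat.cast_nonneg i) hgap'0
        simp only [htt'_def]; linarith only [h1]
      have htt'_le : ∀ i : ℕ, i ≤ n' → tt' i ≤ b' := by
        intro i hi
        have h1 : (i:ℝ) * gap' ≤ n' * gap' := by
          apply mul_le_mul_of_nonneg_right _ hgap'0
          exact_mod_cast hi
        simp only [htt'_def]; linarith only [h1, hng']
      have htt'_mem : ∀ i : ℕ, i ≤ n' → tt' i ∈ Set.Icc a' b' := fun i hi =>
        ⟨le_trans hsa' (htt'_ge i), htt'_le i hi⟩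
      have htt'_n : tt' n' = b' := by
        simp only [htt'_def]; linarith only [hng']
      have htt'_0 : tt' 0 = s := by simp [htt'_def]
      obtain ⟨c', hc'_def⟩ : ∃ f : ℕ → ℝ,
          f = fun i => if i = 0 then u else if i = n' then u₂ else w (tt' i) := ⟨_, rfl⟩
      have hc'_all : ∀ i : ℕ, i ≤ n' → 0 ≤ c' i ∧ dist (σ' (tt' i)) (α (c' i)) ≤ K := by
        intro i hi
        by_cases h0 : i = 0
        · have hceq : c' i = u := by rw [hc'_def]; simp [h0]
          rw [hceq, h0, htt'_0]
          exact ⟨hu0, hud⟩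
        · by_cases hn'' : i = n'
          · have hceq : c' i = u₂ := by rw [hc'_def]; simp [h0, hn'', hn'0]
            rw [hceq, hn'', htt'_n, hend2, dist_self]
            exact ⟨hu₂0, hK0⟩
          · have hceq : c' i = w (tt' i) := by rw [hc'_def]; simp [h0, hn'']
            rw [hceq]
            exact ⟨hw0 _, hwK _ (htt'_mem i hi)⟩
      have hc'_step : ∀ i : ℕ, i < n' → |c' (i+1) - c' i| ≤ J := by
        intro i hilt
        have h1 : |tt' (i+1) - tt' i| ≤ 1 := by
          have he : tt' (i+1) - tt' i = gap' := by
            simp only [htt'_def]; push_cast; ring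
          rw [he, abs_of_nonneg hgap'0]; exact hgap'1
        have hi1 := hc'_all (i+1) (by omega)
        have hi0 := hc'_all i (by omega)
        exact hchain (tt' (i+1)) (htt'_mem _ (by omega)) (tt' i) (htt'_mem _ (by omega)) h1
          (c' (i+1)) (c' i) hi1.1 hi0.1 hi1.2 hi0.2
      have hc'0W : V + R/2 + J < c' 0 := by
        have hceq : c' 0 = u := by rw [hc'_def]; simp
        rw [hceq]
        linarith only [hcon, hR_def, hK0, he'0, hprod]
      have hc'nW : c' n' ≤ V + R/2 + J := by
        have hceq : c' n' = u₂ := by rw [hc'_def]; simp [hn'0]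
        rw [hceq]
        linarith only [hu₂V, hR0, hJ0]
      obtain ⟨i₂, hi₂n, hv₂l, hv₂u⟩ := cross_down c' n' J (V + R/2) hc'0W hc'nW
        (fun i hi => by linarith only [(abs_le.mp (hc'_step i hi)).1])
      -- derive the contradiction
      have hA1 := (hc_all i₁ hi₁n).2
      have hA1' := (hc_all i₁ hi₁n).1
      have hA2 := (hc'_all i₂ hi₂n).2
      have hA2' := (hc'_all i₂ hi₂n).1
      have ht₁s : tt i₁ ≤ s := htt_le i₁ hi₁n
      have hst₂ : s ≤ tt' i₂ := htt'_ge i₂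
      have hvvJ : |c i₁ - c' i₂| ≤ J := abs_le.mpr ⟨by linarith only [hv₁l, hv₂u], by linarith only [hv₁u, hv₂l]⟩
      have h12 : dist (σ' (tt i₁)) (σ' (tt' i₂)) ≤ 2*K + J := by
        have hd := dist_triangle4 (σ' (tt i₁)) (α (c i₁)) (α (c' i₂)) (σ' (tt' i₂))
        have hvv : dist (α (c i₁)) (α (c' i₂)) = |c i₁ - c' i₂| := hray _ _ hA1' hA2'
        rw [dist_comm (α (c' i₂)) (σ' (tt' i₂))] at hd
        linarith only [hd, hvv, hA1, hA2, hvvJ]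
      have hlow := (hqg (tt i₁) (htt_mem i₁ hi₁n) (tt' i₂) (htt'_mem i₂ hi₂n)).1
      have habs : |tt i₁ - tt' i₂| = tt' i₂ - tt i₁ := by
        rw [abs_sub_comm, abs_of_nonneg (by linarith only [ht₁s, hst₂])]
      have htt12 : tt' i₂ - tt i₁ ≤ lam * (2*K + J + e') := by
        have h5 : (tt' i₂ - tt i₁)/lam ≤ 2*K + J + e' := by
          rw [← habs]; linarith only [hlow, h12]
        have h6 := (div_le_iff₀ hlam0).mp h5
        linarith only [h6]
      have hup : dist (σ' (tt i₁)) (σ' s) ≤ lam * (lam * (2*K + J + e')) + e' := by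
        have h5 := (hqg (tt i₁) (htt_mem i₁ hi₁n) s hs).2
        have habs2 : |tt i₁ - s| = s - tt i₁ := by
          rw [abs_sub_comm, abs_of_nonneg (by linarith only [ht₁s])]
        have h6 : lam * |tt i₁ - s| ≤ lam * (lam * (2*K + J + e')) := by
          rw [habs2]
          apply mul_le_mul_of_nonneg_left _ (by linarith only [hlam0.le] : (0:ℝ) ≤ lam)
          linarith only [htt12, hst₂]
        linarith only [h5, h6]
      have hv₁ltu : c i₁ ≤ u := by linarith only [hv₁u, hcon, hR_def, hK0, he'0, hprod]
      have hdd : dist (α (c i₁)) (α u) = u - c i₁ := by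
        rw [hray _ _ hA1' hu0, abs_of_nonpos (by linarith only [hv₁ltu])]; ring
      have hlow2 : (u - c i₁) - 2*K ≤ dist (σ' (tt i₁)) (σ' s) := by
        have hd := dist_triangle4 (α (c i₁)) (σ' (tt i₁)) (σ' s) (α u)
        rw [hdd, dist_comm (α (c i₁)) (σ' (tt i₁))] at hd
        linarith only [hd, hA1, hud]
      have hexp : lam * (lam * (2*K + J + e')) = lam^2*(2*K + J + e') := by ring
      rw [hexp] at hup
      linarith only [hv₁u, hup, hlow2, hcon, hR_def]
noncomputable def morseEps (N : ℝ → ℝ → ℝ) (D eps : ℝ) : ℝ := eps + 4 * N 1 (2*D)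
noncomputable def morseK (N : ℝ → ℝ → ℝ) (D lam eps : ℝ) : ℝ := N lam (morseEps N D eps)
noncomputable def morseJ (N : ℝ → ℝ → ℝ) (D lam eps : ℝ) : ℝ :=
  2 * morseK N D lam eps + lam + morseEps N D eps
noncomputable def morseR (N : ℝ → ℝ → ℝ) (D lam eps : ℝ) : ℝ :=
  2 * morseJ N D lam eps + 4 * morseK N D lam eps
    + 2 * lam^2 * (2 * morseK N D lam eps + morseJ N D lam eps + morseEps N D eps)
    + 2 * morseEps N D eps + 2
noncomputable def morseJunk (N : ℝ → ℝ → ℝ) (D lam eps : ℝ) : ℝ :=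
  morseK N D lam eps + (3 * N 1 (2*D) + 3*D + 2) + 2*D + N 1 (2*D) + morseR N D lam eps
set_option maxHeartbeats 1000000 in
theorem geodesics_to_morse_ray_uniformly_morse (N : ℝ → ℝ → ℝ) (hN : IsMorseGauge N)
    (D : ℝ) (hD : 0 ≤ D) :
    ∃ N' : ℝ → ℝ → ℝ, IsMorseGauge N' ∧ (∀ lam eps : ℝ, N lam eps ≤ N' lam eps) ∧
      ∀ (X : Type) (_ : MetricSpace X) (_ : ProperSpace X), IsGeodesicSpace X →
        ∀ (α : ℝ → X) (p p' : X), IsGeodesicRay α → IsMorseSet N (α '' Set.Ici (0 : ℝ)) →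
          α 0 = p → dist p p' ≤ D →
          ∀ (q : X), q ∈ α '' Set.Ici (0 : ℝ) →
            ∀ γ : ℝ → X, IsGeodesicSegment γ p' q →
              IsMorseSet N' (γ '' Set.Icc (0 : ℝ) (dist p' q)) := by
  classical
  refine ⟨fun lam eps => N lam eps + max 0 (morseJunk N D lam eps), ?_, ?_, ?_⟩
  · intro lam eps hlam heps
    have h := hN lam eps hlam heps
    have h2 := le_max_left (0:ℝ) (morseJunk N D lam eps)
    simp only []
    linarith
  · intro lam eps
    have h2 := le_max_left (0:ℝ) (morseJunk N D lam eps)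
    simp only []
    linarith
  intro X _ _ hgeo α p p' hray hMorse hα0 hpp' q hq γ hγ
  obtain ⟨T, hT, hαT⟩ := hq
  have hT0 : (0:ℝ) ≤ T := hT
  set m := N 1 (2*D) with hm_def
  have hm0 : 0 ≤ m := hN 1 (2*D) le_rfl (by linarith)
  have hL0 : (0:ℝ) ≤ dist p' q := dist_nonneg
  have hd00 : (0:ℝ) ≤ dist p p' := dist_nonneg
  obtain ⟨hγ0, hγL, hγd⟩ := hγ
  set A := α '' Set.Ici (0:ℝ) with hA_def
  set G := γ '' Set.Icc (0:ℝ) (dist p' q) with hG_def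
  have hAcl : IsClosed A := ray_image_closed hray
  have hAne : A.Nonempty := ⟨α 0, 0, Set.self_mem_Ici, rfl⟩
  have hqG : q ∈ G := ⟨dist p' q, ⟨hL0, le_rfl⟩, hγL⟩
  have hGne : G.Nonempty := ⟨q, hqG⟩
  have nearA : ∀ (x : X) (K : ℝ), Metric.infDist x A ≤ K → ∃ u, 0 ≤ u ∧ dist x (α u) ≤ K := by
    intro x K hK
    obtain ⟨y, hyA, hy⟩ := hAcl.exists_infDist_eq_dist hAne x
    obtain ⟨u, hu0, rfl⟩ := hyA
    exact ⟨u, hu0, by rw [← hy]; exact hK⟩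
  -- the concatenated path δ from p to p' to q
  obtain ⟨η, hη0, hηd0, hηd⟩ := hgeo p p'
  set δ : ℝ → X := fun s => if s ≤ 0 then η (s + dist p p') else γ s with hδ_def
  have hδa : δ (-(dist p p')) = p := by
    simp only [hδ_def, if_pos (neg_nonpos.mpr hd00)]
    have h : -(dist p p') + dist p p' = 0 := by ring
    rw [h, hη0]
  have hδb : δ (dist p' q) = q := by
    rcases lt_or_eq_of_le hL0 with h | h
    · simp only [hδ_def, if_neg (not_le.mpr h)]; exact hγL
    · have hpq : p' = q := dist_eq_zero.mp h.symm
      rw [← h]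
      simp only [hδ_def, if_pos (le_refl (0:ℝ)), zero_add, hηd0]
      exact hpq
  have hδγ : ∀ s ∈ Set.Icc (0:ℝ) (dist p' q), δ s = γ s := by
    intro s hs
    rcases lt_or_eq_of_le hs.1 with h | h
    · simp only [hδ_def, if_neg (not_le.mpr h)]
    · simp only [hδ_def, ← h, if_pos le_rfl, zero_add, hηd0, hγ0]
  have hδone : ∀ s ∈ Set.Icc (-(dist p p')) (dist p' q), ∀ t ∈ Set.Icc (-(dist p p')) (dist p' q),
      s ≤ t → (t - s) - 2 * dist p p' ≤ dist (δ s) (δ t) ∧ dist (δ s) (δ t) ≤ t - s := by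
    intro s hs t ht hst
    by_cases h1 : t ≤ 0
    · have h2 : s ≤ 0 := le_trans hst h1
      simp only [hδ_def, if_pos h1, if_pos h2]
      rw [hηd (s + dist p p') ⟨by linarith [hs.1], by linarith⟩
          (t + dist p p') ⟨by linarith [ht.1], by linarith⟩]
      rw [abs_of_nonpos (by linarith)]
      constructor <;> linarith
    · push_neg at h1
      by_cases h2 : s ≤ 0
      · simp only [hδ_def, if_pos h2, if_neg (not_le.mpr h1)]
        have e1 : dist (η (s + dist p p')) p' = -s := by
          have h3 := hηd (s + dist p p') ⟨by linarith [hs.1], by linarith⟩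
            (dist p p') ⟨hd00, le_rfl⟩
          rw [hηd0] at h3
          have harg : s + dist p p' - dist p p' = s := by ring
          rw [h3, harg, abs_of_nonpos h2]
        have e2 : dist p' (γ t) = t := by
          rw [← hγ0, hγd 0 ⟨le_rfl, hL0⟩ t ⟨h1.le, ht.2⟩, abs_of_nonpos (by linarith)]; ring
        constructor
        · have htr := dist_triangle p' (η (s + dist p p')) (γ t)
          rw [dist_comm p' (η (s + dist p p'))] at htr
          rw [e1] at htr; rw [e2] at htr
          have hsd : -(dist p p') ≤ s := hs.1
          linarith
        · have htr := dist_triangle (η (s + dist p p')) p' (γ t)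
          rw [e1, e2] at htr
          linarith
      · push_neg at h2
        simp only [hδ_def, if_neg (not_le.mpr h2), if_neg (not_le.mpr (lt_of_lt_of_le h2 hst))]
        rw [hγd s ⟨h2.le, hs.2⟩ t ⟨by linarith, ht.2⟩, abs_of_nonpos (by linarith)]
        constructor <;> linarith
  have hδqg : IsQuasiGeodesicOn 1 (2*D) (-(dist p p')) (dist p' q) δ := by
    intro s hs t ht
    rcases le_total s t with h | h
    · obtain ⟨hl, hu⟩ := hδone s hs t ht h
      rw [abs_of_nonpos (by linarith)]
      constructor
      · rw [div_one]; linarith [hpp']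
      · linarith [hpp']
    · obtain ⟨hl, hu⟩ := hδone t ht s hs h
      rw [abs_of_nonneg (by linarith), dist_comm]
      constructor
      · rw [div_one]; linarith [hpp']
      · linarith [hpp']
  have hδA : ∀ s ∈ Set.Icc (-(dist p p')) (dist p' q), Metric.infDist (δ s) A ≤ m := by
    have := hMorse 1 (2*D) (-(dist p p')) (dist p' q) δ le_rfl (by linarith)
      (by linarith) hδqg (by rw [hδa, ← hα0]; exact ⟨0, Set.self_mem_Ici, rfl⟩)
      (by rw [hδb, ← hαT]; exact ⟨T, hT, rfl⟩)
    exact this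
  have hγA : ∀ s ∈ Set.Icc (0:ℝ) (dist p' q), Metric.infDist (γ s) A ≤ m := by
    intro s hs
    have h := hδA s ⟨by linarith [hs.1], hs.2⟩
    rwa [hδγ s hs] at h
  -- Step 2: the initial segment of α is close to G
  have hstep2 : ∀ u, 0 ≤ u → u ≤ T → Metric.infDist (α u) G ≤ 3*m + 3*D + 2 := by
    intro u hu0 huT
    by_cases hcase : T - u ≤ m + 1
    · have hdq : dist (α u) q = T - u := by
        rw [← hαT, hray u T hu0 hT0, abs_of_nonpos (by linarith)]; ring
      have h1 : Metric.infDist (α u) G ≤ dist (α u) q := Metric.infDist_le_dist_of_mem hqG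
      linarith
    · push_neg at hcase
      set Au := α '' Set.Icc (0:ℝ) u with hAu_def
      have hAune : Au.Nonempty := ⟨α 0, 0, Set.mem_Icc.mpr ⟨le_rfl, hu0⟩, rfl⟩
      have hAucp : IsCompact Au := isCompact_Icc.image_of_continuousOn (ray_continuousOn hray u)
      set S := {r : ℝ | r ∈ Set.Icc (-(dist p p')) (dist p' q) ∧ Metric.infDist (δ r) Au ≤ m}
        with hS_def
      have hS0 : (-(dist p p')) ∈ S := by
        constructor
        · exact ⟨le_rfl, by linarith⟩
        · rw [hδa, ← hα0]
          have hmem : (α 0) ∈ Au := ⟨0, Set.mem_Icc.mpr ⟨le_rfl, hu0⟩, rfl⟩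
          calc Metric.infDist (α 0) Au ≤ dist (α 0) (α 0) := Metric.infDist_le_dist_of_mem hmem
          _ = 0 := dist_self _
          _ ≤ m := hm0
      have hSne : S.Nonempty := ⟨_, hS0⟩
      have hSbdd : BddAbove S := ⟨dist p' q, fun x hx => hx.1.2⟩
      set W := sSup S with hW_def
      have hWlb : -(dist p p') ≤ W := le_csSup hSbdd hS0
      have hWub : W ≤ dist p' q := csSup_le hSne (fun x hx => hx.1.2)
      have hLnotS : (dist p' q) ∉ S := by
        rintro ⟨-, hinf⟩
        obtain ⟨y, hy, hyd⟩ := hAucp.exists_infDist_eq_dist hAune (δ (dist p' q))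
        obtain ⟨v, hv, rfl⟩ := hy
        have hdv : dist (δ (dist p' q)) (α v) = T - v := by
          rw [hδb, ← hαT, hray T v hT0 hv.1, abs_of_nonneg (by linarith [hv.2])]
        rw [hyd, hdv] at hinf
        linarith [hv.2]
      obtain ⟨s₁, hs₁S, hs₁gt⟩ := exists_lt_of_lt_csSup hSne (show W - 1 < W by linarith)
      set s₂ := min (W + 1) (dist p' q) with hs₂_def
      have hs₁W : s₁ ≤ W := le_csSup hSbdd hs₁S
      have hs₁mem := hs₁S.1
      have hs₂mem : s₂ ∈ Set.Icc (-(dist p p')) (dist p' q) :=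
        ⟨le_min (by linarith) (by linarith), min_le_right _ _⟩
      have hs₂notS : s₂ ∉ S := by
        intro hmem
        rcases le_or_gt (W + 1) (dist p' q) with h | h
        · have he : s₂ = W + 1 := min_eq_left h
          have h2 := le_csSup hSbdd hmem
          rw [he] at h2; linarith
        · have he : s₂ = dist p' q := min_eq_right h.le
          rw [he] at hmem; exact hLnotS hmem
      have h12a : s₁ ≤ s₂ := le_min (by linarith) hs₁mem.2
      have h12b : s₂ ≤ s₁ + 2 := le_trans (min_le_left _ _) (by linarith)
      have hd12 : dist (δ s₁) (δ s₂) ≤ 2 + 2*D := by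
        have h := (hδqg s₁ hs₁mem s₂ hs₂mem).2
        rw [abs_of_nonpos (by linarith)] at h
        linarith
      obtain ⟨y₁, hy₁, hyd₁⟩ := hAucp.exists_infDist_eq_dist hAune (δ s₁)
      obtain ⟨v₁, hv₁, rfl⟩ := hy₁
      have hd₁ : dist (δ s₁) (α v₁) ≤ m := by rw [← hyd₁]; exact hs₁S.2
      obtain ⟨v₂, hv₂0, hd₂⟩ := nearA (δ s₂) m (hδA s₂ hs₂mem)
      have hv₂u : u < v₂ := by
        by_contra hcon
        push_neg at hcon
        exact hs₂notS ⟨hs₂mem, le_trans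
          (Metric.infDist_le_dist_of_mem ⟨v₂, Set.mem_Icc.mpr ⟨hv₂0, hcon⟩, rfl⟩) hd₂⟩
      have hv12 : dist (α v₁) (α v₂) = v₂ - v₁ := by
        rw [hray v₁ v₂ hv₁.1 hv₂0, abs_of_nonpos (by linarith [hv₁.2])]; ring
      have hd3 : dist (α v₁) (α v₂) ≤ 2*m + 2 + 2*D := by
        calc dist (α v₁) (α v₂) ≤ dist (α v₁) (δ s₁) + dist (δ s₁) (δ s₂) + dist (δ s₂) (α v₂) :=
          dist_triangle4 _ _ _ _
        _ ≤ m + (2 + 2*D) + m :=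
          add_le_add (add_le_add (by rw [dist_comm]; exact hd₁) hd12) hd₂
        _ = 2*m + 2 + 2*D := by ring
      have hduv : dist (α u) (α v₁) = u - v₁ := by
        rw [hray u v₁ hu0 hv₁.1, abs_of_nonneg (by linarith [hv₁.2])]
      have huv : u - v₁ ≤ 2*m + 2 + 2*D := by rw [hv12] at hd3; linarith
      have hds : dist (α u) (δ s₁) ≤ 3*m + 2 + 2*D := by
        calc dist (α u) (δ s₁) ≤ dist (α u) (α v₁) + dist (α v₁) (δ s₁) := dist_triangle _ _ _
        _ ≤ (2*m + 2 + 2*D) + m := by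
            rw [hduv]
            exact add_le_add huv (by rw [dist_comm]; exact hd₁)
        _ = 3*m + 2 + 2*D := by ring
      by_cases hss : s₁ ≤ 0
      · have e1 : dist (δ s₁) p' ≤ D := by
          simp only [hδ_def, if_pos hss]
          have h3 := hηd (s₁ + dist p p') ⟨by linarith [hs₁mem.1], by linarith⟩
            (dist p p') ⟨hd00, le_rfl⟩
          rw [hηd0] at h3
          rw [h3]
          have harg : s₁ + dist p p' - dist p p' = s₁ := by ring
          rw [harg, abs_of_nonpos hss]
          linarith [hs₁mem.1]
        have hp'G : p' ∈ G := ⟨0, Set.mem_Icc.mpr ⟨le_rfl, hL0⟩, hγ0⟩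
        calc Metric.infDist (α u) G ≤ dist (α u) p' := Metric.infDist_le_dist_of_mem hp'G
        _ ≤ dist (α u) (δ s₁) + dist (δ s₁) p' := dist_triangle _ _ _
        _ ≤ (3*m + 2 + 2*D) + D := add_le_add hds e1
        _ ≤ 3*m + 3*D + 2 := by linarith
      · push_neg at hss
        have hmemG : δ s₁ ∈ G := by
          rw [hδγ s₁ ⟨hss.le, hs₁mem.2⟩]
          exact ⟨s₁, Set.mem_Icc.mpr ⟨hss.le, hs₁mem.2⟩, rfl⟩
        calc Metric.infDist (α u) G ≤ dist (α u) (δ s₁) := Metric.infDist_le_dist_of_mem hmemG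
        _ ≤ 3*m + 3*D + 2 := by linarith
  -- main Morse verification
  intro lam eps a b σ hlam heps hab hσqg hσa hσb s hs
  show Metric.infDist (σ s) G ≤ N lam eps + max 0 (morseJunk N D lam eps)
  have hlam0 : (0:ℝ) < lam := lt_of_lt_of_le one_pos hlam
  set e' := eps + 4*m with he'_def
  have he'0 : 0 ≤ e' := by rw [he'_def]; linarith
  set K := N lam e' with hK_def
  have hK0 : 0 ≤ K := hN lam e' hlam he'0
  obtain ⟨sa, hsa, hsaeq⟩ := hσa
  obtain ⟨sb, hsb, hsbeq⟩ := hσb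
  have hinfa : Metric.infDist (σ a) A ≤ m := by rw [← hsaeq]; exact hγA sa hsa
  have hinfb : Metric.infDist (σ b) A ≤ m := by rw [← hsbeq]; exact hγA sb hsb
  obtain ⟨u₁, hu₁0, hdu₁⟩ := nearA (σ a) m hinfa
  obtain ⟨u₂, hu₂0, hdu₂⟩ := nearA (σ b) m hinfb
  have hpqT : dist p q = T := by
    rw [← hα0, ← hαT, hray 0 T le_rfl hT0, abs_of_nonpos (by linarith)]
    ring
  have hbound : ∀ (x : X) (sx : ℝ), sx ∈ Set.Icc (0:ℝ) (dist p' q) → γ sx = x →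
      ∀ u, 0 ≤ u → dist x (α u) ≤ m → u ≤ T + 2*D + m := by
    intro x sx hsx hx u hu0 hdx
    have h1 : dist p (α u) = u := by
      rw [← hα0, hray 0 u le_rfl hu0, abs_of_nonpos (by linarith)]; ring
    have h2 : dist p' x = sx := by
      rw [← hx, ← hγ0, hγd 0 ⟨le_rfl, hL0⟩ sx hsx, abs_of_nonpos (by linarith [hsx.1])]
      ring
    have h3 : dist p (α u) ≤ dist p p' + dist p' x + dist x (α u) := dist_triangle4 _ _ _ _
    have h4 : dist p' q ≤ dist p p' + T := by
      have h5 := dist_triangle p' p q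
      rw [dist_comm p' p, hpqT] at h5; exact h5
    rw [h1, h2] at h3
    have h6 := hsx.2
    linarith [hpp']
  have hu₁T : u₁ ≤ T + 2*D + m := hbound (σ a) sa hsa hsaeq u₁ hu₁0 hdu₁
  have hu₂T : u₂ ≤ T + 2*D + m := hbound (σ b) sb hsb hsbeq u₂ hu₂0 hdu₂
  -- extend σ to a quasigeodesic σ' with endpoints on the ray
  obtain ⟨g₁, hg₁0, hg₁d0, hg₁d⟩ := hgeo (α u₁) (σ a)
  obtain ⟨g₂, hg₂0, hg₂d0, hg₂d⟩ := hgeo (σ b) (α u₂)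
  set m₁ := dist (α u₁) (σ a) with hm₁_def
  set m₂ := dist (σ b) (α u₂) with hm₂_def
  have hm₁0 : 0 ≤ m₁ := dist_nonneg
  have hm₂0 : 0 ≤ m₂ := dist_nonneg
  have hm₁m : m₁ ≤ m := by rw [hm₁_def, dist_comm]; exact hdu₁
  have hm₂m : m₂ ≤ m := hdu₂
  set σ' : ℝ → X := fun r => if r < a then g₁ (r - (a - m₁)) else if r ≤ b then σ r else g₂ (r - b)
    with hσ'_def
  set cl : ℝ → ℝ := fun r => max a (min r b) with hcl_def
  have hclmem : ∀ r, cl r ∈ Set.Icc a b := fun r =>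
    ⟨le_max_left _ _, max_le hab (min_le_right _ _)⟩
  have hclnear : ∀ r ∈ Set.Icc (a - m₁) (b + m₂), |r - cl r| ≤ m ∧ dist (σ' r) (σ (cl r)) ≤ m := by
    intro r hr
    by_cases h1 : r < a
    · have hc : cl r = a := by
        simp only [hcl_def]
        rw [min_eq_left (le_trans h1.le hab), max_eq_left h1.le]
      constructor
      · rw [hc, abs_of_nonpos (by linarith)]; linarith [hr.1]
      · rw [hc]
        simp only [hσ'_def, if_pos h1]
        have hx : r - (a - m₁) ∈ Set.Icc 0 m₁ := ⟨by linarith [hr.1], by linarith⟩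
        have h3 := hg₁d (r - (a - m₁)) hx m₁ ⟨hm₁0, le_rfl⟩
        rw [hg₁d0] at h3
        rw [h3]
        have harg : r - (a - m₁) - m₁ = r - a := by ring
        rw [harg, abs_of_nonpos (by linarith)]
        linarith [hr.1, hm₁m]
    · push_neg at h1
      by_cases h2 : r ≤ b
      · have hc : cl r = r := by
          simp only [hcl_def]
          rw [min_eq_left h2, max_eq_right h1]
        rw [hc]
        constructor
        · simp only [sub_self, abs_zero]; exact hm0
        · simp only [hσ'_def, if_neg (not_lt.mpr h1), if_pos h2]
          simp only [dist_self]; exact hm0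
      · push_neg at h2
        have hc : cl r = b := by
          simp only [hcl_def]
          rw [min_eq_right h2.le, max_eq_right hab]
        constructor
        · rw [hc, abs_of_nonneg (by linarith)]; linarith [hr.2]
        · rw [hc]
          simp only [hσ'_def, if_neg (not_lt.mpr (le_trans hab h2.le)), if_neg (not_le.mpr h2)]
          have hx : r - b ∈ Set.Icc 0 m₂ := ⟨by linarith, by linarith [hr.2]⟩
          have h3 := hg₂d (r - b) hx 0 ⟨le_rfl, hm₂0⟩
          rw [hg₂0] at h3
          rw [h3]
          rw [sub_zero, abs_of_nonneg (by linarith)]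
          linarith [hr.2]
  have hcllip : ∀ r r', |cl r - cl r'| ≤ |r - r'| := by
    intro r r'; simp only [hcl_def]; exact clamp_lip a b r r'
  have hσ'qg : IsQuasiGeodesicOn lam e' (a - m₁) (b + m₂) σ' := by
    intro r hr r' hr'
    obtain ⟨h1, h2⟩ := hclnear r hr
    obtain ⟨h1', h2'⟩ := hclnear r' hr'
    have hq := hσqg (cl r) (hclmem r) (cl r') (hclmem r')
    have hcll := hcllip r r'
    constructor
    · have e1 : |r - r'| ≤ |cl r - cl r'| + 2*m := by
        have t1 := abs_sub_le r (cl r) r'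
        have t2 := abs_sub_le (cl r) (cl r') r'
        have t3 : |cl r' - r'| = |r' - cl r'| := abs_sub_comm _ _
        linarith
      have e2 : |r - r'| / lam ≤ |cl r - cl r'| / lam + 2*m := by
        have t1 : |r - r'| / lam ≤ (|cl r - cl r'| + 2*m) / lam := by gcongr
        have t2 : (2*m)/lam ≤ 2*m := div_le_self (by linarith) hlam
        have t3 : (|cl r - cl r'| + 2*m) / lam = |cl r - cl r'|/lam + (2*m)/lam := by ring
        linarith
      have e3 := dist_triangle4 (σ (cl r)) (σ' r) (σ' r') (σ (cl r'))
      rw [dist_comm (σ (cl r)) (σ' r)] at e3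
      have hq1 := hq.1
      rw [he'_def]
      linarith
    · have e3 := dist_triangle4 (σ' r) (σ (cl r)) (σ (cl r')) (σ' r')
      rw [dist_comm (σ (cl r')) (σ' r')] at e3
      have hq2 := hq.2
      have e4 : lam * |cl r - cl r'| ≤ lam * |r - r'| :=
        mul_le_mul_of_nonneg_left hcll (by linarith)
      rw [he'_def]
      linarith
  have hend1 : σ' (a - m₁) = α u₁ := by
    rcases eq_or_lt_of_le hm₁0 with h | h
    · have hqa : α u₁ = σ a := by
        have hdd : dist (α u₁) (σ a) = 0 := by rw [← hm₁_def, ← h]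
        rwa [dist_eq_zero] at hdd
      have hb : a - m₁ = a := by rw [← h]; ring
      rw [hb]
      simp only [hσ'_def, if_neg (lt_irrefl a), if_pos hab]
      exact hqa.symm
    · have hlt : a - m₁ < a := by linarith
      simp only [hσ'_def, if_pos hlt]
      have harg : a - m₁ - (a - m₁) = 0 := by ring
      rw [harg, hg₁0]
  have hend2 : σ' (b + m₂) = α u₂ := by
    rcases eq_or_lt_of_le hm₂0 with h | h
    · have hqa : σ b = α u₂ := by
        have hdd : dist (σ b) (α u₂) = 0 := by rw [← hm₂_def, ← h]
        rwa [dist_eq_zero] at hdd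
      have hb : b + m₂ = b := by rw [← h]; ring
      rw [hb]
      simp only [hσ'_def, if_neg (not_lt.mpr hab), if_pos le_rfl]
      exact hqa
    · have hlt : b < b + m₂ := by linarith
      simp only [hσ'_def, if_neg (not_lt.mpr (le_trans hab hlt.le)), if_neg (not_le.mpr hlt)]
      have harg : b + m₂ - b = m₂ := by ring
      rw [harg, hg₂d0]
  have hKbd : ∀ r ∈ Set.Icc (a - m₁) (b + m₂), Metric.infDist (σ' r) A ≤ K :=
    hMorse lam e' (a - m₁) (b + m₂) σ' hlam he'0 (by linarith) hσ'qg
      (by rw [hend1]; exact ⟨u₁, Set.mem_Ici.mpr hu₁0, rfl⟩)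
      (by rw [hend2]; exact ⟨u₂, Set.mem_Ici.mpr hu₂0, rfl⟩)
  -- locate σ s near the ray and conclude
  have hsm : s ∈ Set.Icc (a - m₁) (b + m₂) := ⟨by linarith [hs.1], by linarith [hs.2]⟩
  have hσ's : σ' s = σ s := by
    simp only [hσ'_def, if_neg (not_lt.mpr hs.1), if_pos hs.2]
  obtain ⟨u, hu0, hud⟩ := nearA (σ' s) K (hKbd s hsm)
  set J := 2*K + lam + e' with hJ_def
  have hJ0 : 0 ≤ J := by rw [hJ_def]; linarith
  set R := 2*J + 4*K + 2*lam^2*(2*K + J + e') + 2*e' + 2 with hR_def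
  have hsq : 0 ≤ lam^2 := sq_nonneg lam
  have hprod : 0 ≤ 2*lam^2*(2*K + J + e') := mul_nonneg (by linarith) (by linarith)
  have hR0 : 0 ≤ R := by rw [hR_def]; linarith
  set V := max u₁ u₂ with hV_def
  have hV0 : 0 ≤ V := le_trans hu₁0 (by rw [hV_def]; exact le_max_left _ _)
  have hVT : V ≤ T + 2*D + m := by rw [hV_def]; exact max_le hu₁T hu₂T
  have huV : u ≤ V + R := by
    have hcb := chain_bound hray hlam he'0 hK0 hσ'qg
      (fun r hr => nearA (σ' r) K (hKbd r hr)) hu₁0 hu₂0 hend1 hend2 hsm hu0 hud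
    rw [hV_def, hR_def, hJ_def]
    linarith [hcb]
  have hαuG : Metric.infDist (α u) G ≤ (3*m + 3*D + 2) + (2*D + m + R) := by
    by_cases hc : u ≤ T
    · have := hstep2 u hu0 hc
      linarith
    · push_neg at hc
      have h1 : Metric.infDist (α u) G ≤ Metric.infDist (α T) G + dist (α u) (α T) :=
        Metric.infDist_le_infDist_add_dist
      have h2 : dist (α u) (α T) = u - T := by
        rw [hray u T hu0 hT0, abs_of_nonneg (by linarith)]
      have h3 := hstep2 T hT0 le_rfl
      linarith
  have hfinal : Metric.infDist (σ s) G ≤ K + ((3*m + 3*D + 2) + (2*D + m + R)) := by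
    have h1 : Metric.infDist (σ s) G ≤ Metric.infDist (α u) G + dist (σ s) (α u) :=
      Metric.infDist_le_infDist_add_dist
    have h2 : dist (σ s) (α u) ≤ K := by rw [← hσ's]; exact hud
    linarith
  have hjunk : morseJunk N D lam eps = K + ((3*m + 3*D + 2) + (2*D + m + R)) := by
    simp only [morseJunk, morseR, morseJ, morseK, morseEps, hR_def, hJ_def, hK_def, he'_def,
      hm_def]
    ring
  have hNl : 0 ≤ N lam eps := hN lam eps hlam heps
  rw [hjunk]
  have hmax := le_max_right (0:ℝ) (K + ((3*m + 3*D + 2) + (2*D + m + R)))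
  linarith
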